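/- The vector representation matrices of U_q[osp(2|n)] satisfy the q-Serre relations for the even simple roots: for every even simple root index b ∈ {1, …, k−1} and every simple root index c ∈ {1, …, k−1, s, t} with c ≠ b, (ad_b)^{1 − a_{bc}}(E_c) = 0, where E_c = e_c q^{h_c/2}, ad_b(X) = E_b X − q^{h_b} X q^{−h_b} E_b, and a_{bc} = 2(α_b, α_c)/(α_b, α_b) is the Cartan matrix entry. -/

import Mathlib

open Matrix BigOperators

namespace Osp2n

/-- Index set `I = {e1,e2} ∪ {o1,…,o(2k)}`: `inl` indices are even, `inr` odd. -/
abbrev Idx (k : ℕ) := Fin 2 ⊕ Fin (2*k)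

/-- parity `[a]` -/
def par {k : ℕ} : Idx k → ℕ
  | .inl _ => 0
  | .inr _ => 1

/-- conjugation of indices: `ē1 = e2`, `ē2 = e1`, `ōμ = o(n+1−μ)` -/
def bar {k : ℕ} : Idx k → Idx k
  | .inl i => .inl i.rev
  | .inr j => .inr j.rev

/-- sign factor `ξ_a` -/
def xi {k : ℕ} : Idx k → ℝ
  | .inl _ => 1
  | .inr j => (-1 : ℝ) ^ ((j : ℕ) + 1)

/-- weight of an index, in `ℚ^{k+1}`; coordinates `0,…,k-1` are `δ_1,…,δ_k`,
coordinate `k` is `ε_1`. -/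
def wt {k : ℕ} : Idx k → (Fin (k+1) → ℚ)
  | .inl i => if i = 0 then Pi.single (Fin.last k) 1 else -(Pi.single (Fin.last k) 1)
  | .inr j =>
      if h : (j : ℕ) < k then Pi.single ⟨j, by omega⟩ 1
      else -(Pi.single ⟨2*k - 1 - (j:ℕ), by have := j.isLt; omega⟩ 1)

/-- the invariant bilinear form: `(ε_1,ε_1)=1`, `(δ_μ,δ_ν)=−δ_{μν}`, `(ε_1,δ_μ)=0`. -/
def bform {k : ℕ} (u v : Fin (k+1) → ℚ) : ℚ :=
  u (Fin.last k) * v (Fin.last k) - ∑ μ : Fin k, u μ.castSucc * v μ.castSucc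

/-- the graded half-sum of positive roots `ρ = Σ_{μ=1}^k (k−μ) δ_μ`. -/
def rho (k : ℕ) : Fin (k+1) → ℚ :=
  fun i => if (i:ℕ) < k then (k : ℚ) - 1 - ((i:ℕ) : ℚ) else 0

/-- rank realising the total order
`δ_1 > … > δ_k > ε_1 > −ε_1 > −δ_k > … > −δ_1` on the weights of indices:
`ε_b > ε_a` iff `rk b < rk a`. -/
def rk {k : ℕ} : Idx k → ℕ
  | .inl i => if i = 0 then k else k + 1
  | .inr j => if (j:ℕ) < k then (j:ℕ) else (j:ℕ) + 2

/-- real power `q^r` for rational `r` -/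
noncomputable def qp (q : ℝ) (r : ℚ) : ℝ := q ^ (r : ℝ)

/-- elementary matrix `E^a_b` -/
def E {k : ℕ} (a b : Idx k) : Matrix (Idx k) (Idx k) ℝ := Matrix.single a b 1

/-- `σ̃_{ba} = E^b_a − (−1)^{[b]([a]+[b])} ξ_a ξ_b q^{(ρ,ε_a−ε_b)} E^{ā}_{b̄}`
(for `ε_b > ε_a`). -/
noncomputable def sigT {k : ℕ} (q : ℝ) (b a : Idx k) : Matrix (Idx k) (Idx k) ℝ :=
  E b a - ((-1:ℝ) ^ (par b * (par a + par b)) * xi a * xi b *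
    qp q (bform (rho k) (wt a - wt b))) • E (bar a) (bar b)

/-- `σ̃_{ab} = E^a_b − (−1)^{[a]([a]+[b])} ξ_a ξ_b q^{(ρ,ε_a−ε_b)} E^{b̄}_{ā}`
(for `ε_b > ε_a`). -/
noncomputable def sigTop {k : ℕ} (q : ℝ) (a b : Idx k) : Matrix (Idx k) (Idx k) ℝ :=
  E a b - ((-1:ℝ) ^ (par a * (par a + par b)) * xi a * xi b *
    qp q (bform (rho k) (wt a - wt b))) • E (bar b) (bar a)

/-- the vector-representation operator
`σ̂_{ba} = q^{−(ε_a,ε_b)} E^b_a − (−1)^{[b]([a]+[b])} ξ_a ξ_b q^{(ε_a,ε_a)} q^{(ρ,ε_a−ε_b)} E^{ā}_{b̄}`. -/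
noncomputable def sigH {k : ℕ} (q : ℝ) (b a : Idx k) : Matrix (Idx k) (Idx k) ℝ :=
  qp q (-(bform (wt a) (wt b))) • E b a -
    ((-1:ℝ) ^ (par b * (par a + par b)) * xi a * xi b * qp q (bform (wt a) (wt a)) *
      qp q (bform (rho k) (wt a - wt b))) • E (bar a) (bar b)

/-- graded Kronecker product `X ⊗̂ Y` where `Y` is homogeneous of parity `p`:
`(X ⊗̂ Y)_{(a,b),(c,d)} = (−1)^{p·[c]} X_{ac} Y_{bd}`. -/
def gkron {k : ℕ} (p : ℕ) (X Y : Matrix (Idx k) (Idx k) ℝ) :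
    Matrix (Idx k × Idx k) (Idx k × Idx k) ℝ :=
  Matrix.of fun r c => (-1:ℝ) ^ (p * par c.1) * X r.1 c.1 * Y r.2 c.2

/-- the R-matrix of the vector representation:
`𝕽 = Σ_{a,b} q^{(ε_a,ε_b)} E^a_a ⊗̂ E^b_b + (q−q⁻¹) Σ_{ε_b>ε_a} (−1)^{[b]} E^a_b ⊗̂ σ̃_{ba}`. -/
noncomputable def Rmat (k : ℕ) (q : ℝ) : Matrix (Idx k × Idx k) (Idx k × Idx k) ℝ :=
  (∑ a : Idx k, ∑ b : Idx k, qp q (bform (wt a) (wt b)) • gkron 0 (E a a) (E b b))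
  + (q - q⁻¹) • ∑ a : Idx k, ∑ b : Idx k,
      if rk b < rk a then ((-1:ℝ) ^ par b) • gkron (par a + par b) (E a b) (sigT q b a) else 0

/-- the opposite R-matrix of the vector representation:
`𝕽^T = Σ_{a,b} q^{(ε_a,ε_b)} E^a_a ⊗̂ E^b_b + (q−q⁻¹) Σ_{ε_b>ε_a} (−1)^{[a]} E^b_a ⊗̂ σ̃_{ab}`. -/
noncomputable def RmatT (k : ℕ) (q : ℝ) : Matrix (Idx k × Idx k) (Idx k × Idx k) ℝ :=
  (∑ a : Idx k, ∑ b : Idx k, qp q (bform (wt a) (wt b)) • gkron 0 (E a a) (E b b))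
  + (q - q⁻¹) • ∑ a : Idx k, ∑ b : Idx k,
      if rk b < rk a then ((-1:ℝ) ^ par a) • gkron (par a + par b) (E b a) (sigTop q a b) else 0

/-- `𝕽₁₂ = 𝕽 ⊗ 1` -/
noncomputable def R12 (k : ℕ) (q : ℝ) :
    Matrix (Idx k × Idx k × Idx k) (Idx k × Idx k × Idx k) ℝ :=
  Matrix.of fun r c => Rmat k q (r.1, r.2.1) (c.1, c.2.1) * (if r.2.2 = c.2.2 then (1:ℝ) else 0)

/-- `𝕽₂₃ = 1 ⊗ 𝕽` -/
noncomputable def R23 (k : ℕ) (q : ℝ) :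
    Matrix (Idx k × Idx k × Idx k) (Idx k × Idx k × Idx k) ℝ :=
  Matrix.of fun r c => (if r.1 = c.1 then (1:ℝ) else 0) * Rmat k q (r.2.1, r.2.2) (c.2.1, c.2.2)

/-- `𝕽₁₃`, defined termwise with the grading sign
`(𝕽₁₃)_{(a,b,c),(d,e,f)} = Σ_t (−1)^{p_t([d]+[e])} (x_t)_{ad} δ_{be} (y_t)_{cf}`. -/
noncomputable def R13 (k : ℕ) (q : ℝ) :
    Matrix (Idx k × Idx k × Idx k) (Idx k × Idx k × Idx k) ℝ :=
  Matrix.of fun r c =>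
    (∑ x : Idx k, ∑ y : Idx k, qp q (bform (wt x) (wt y)) *
        E x x r.1 c.1 * (if r.2.1 = c.2.1 then (1:ℝ) else 0) * E y y r.2.2 c.2.2)
    + (q - q⁻¹) * ∑ a : Idx k, ∑ b : Idx k,
        if rk b < rk a then
          (-1:ℝ) ^ par b * (-1:ℝ) ^ ((par a + par b) * (par c.1 + par c.2.1)) *
            E a b r.1 c.1 * (if r.2.1 = c.2.1 then (1:ℝ) else 0) * sigT q b a r.2.2 c.2.2
        else 0

/-- `𝕽^T₁₂ = 𝕽^T ⊗ 1` -/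
noncomputable def R12T (k : ℕ) (q : ℝ) :
    Matrix (Idx k × Idx k × Idx k) (Idx k × Idx k × Idx k) ℝ :=
  Matrix.of fun r c => RmatT k q (r.1, r.2.1) (c.1, c.2.1) * (if r.2.2 = c.2.2 then (1:ℝ) else 0)

/-- `𝕽^T₂₃ = 1 ⊗ 𝕽^T` -/
noncomputable def R23T (k : ℕ) (q : ℝ) :
    Matrix (Idx k × Idx k × Idx k) (Idx k × Idx k × Idx k) ℝ :=
  Matrix.of fun r c => (if r.1 = c.1 then (1:ℝ) else 0) * RmatT k q (r.2.1, r.2.2) (c.2.1, c.2.2)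

/-- `𝕽^T₁₃`, defined termwise with the grading sign. -/
noncomputable def R13T (k : ℕ) (q : ℝ) :
    Matrix (Idx k × Idx k × Idx k) (Idx k × Idx k × Idx k) ℝ :=
  Matrix.of fun r c =>
    (∑ x : Idx k, ∑ y : Idx k, qp q (bform (wt x) (wt y)) *
        E x x r.1 c.1 * (if r.2.1 = c.2.1 then (1:ℝ) else 0) * E y y r.2.2 c.2.2)
    + (q - q⁻¹) * ∑ a : Idx k, ∑ b : Idx k,
        if rk b < rk a then
          (-1:ℝ) ^ par a * (-1:ℝ) ^ ((par a + par b) * (par c.1 + par c.2.1)) *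
            E b a r.1 c.1 * (if r.2.1 = c.2.1 then (1:ℝ) else 0) * sigTop q a b r.2.2 c.2.2
        else 0

/-- simple root indices: `inl μ ↦ α_{μ+1}` (1-based, `μ+1 ∈ {1,…,k−1}`), `inr 0 ↦ α_s`,
`inr 1 ↦ α_t`. -/
abbrev SIdx (k : ℕ) := Fin (k-1) ⊕ Fin 2

/-- parity of a simple root -/
def spar {k : ℕ} : SIdx k → ℕ
  | .inl _ => 0
  | .inr _ => 1

/-- the simple roots: `α_μ = δ_μ − δ_{μ+1}` for `1 ≤ μ < k`, `α_s = δ_k − ε_1`,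
`α_t = δ_k + ε_1`. -/
def alph {k : ℕ} : SIdx k → (Fin (k+1) → ℚ)
  | .inl μ => Pi.single ⟨(μ:ℕ), by have := μ.isLt; omega⟩ 1
      - Pi.single ⟨(μ:ℕ)+1, by have := μ.isLt; omega⟩ 1
  | .inr i => (Pi.single (⟨k-1, by omega⟩ : Fin (k+1)) 1 : Fin (k+1) → ℚ)
      + Pi.single (Fin.last k) (if i = 0 then (-1:ℚ) else 1)

/-- vector representation of the raising generators -/
noncomputable def em {k : ℕ} (hk : 1 ≤ k) : SIdx k → Matrix (Idx k) (Idx k) ℝ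
  | .inl μ =>
      E (.inr ⟨(μ:ℕ), by have := μ.isLt; omega⟩) (.inr ⟨(μ:ℕ)+1, by have := μ.isLt; omega⟩)
    + E (.inr ⟨2*k-(μ:ℕ)-2, by have := μ.isLt; omega⟩)
        (.inr ⟨2*k-(μ:ℕ)-1, by have := μ.isLt; omega⟩)
  | .inr i =>
      if i = 0 then
        E (.inr ⟨k-1, by omega⟩) (.inl 0) + ((-1:ℝ)^k) • E (.inl 1) (.inr ⟨k, by omega⟩)
      else
        E (.inr ⟨k-1, by omega⟩) (.inl 1) + ((-1:ℝ)^k) • E (.inl 0) (.inr ⟨k, by omega⟩)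

/-- vector representation of the lowering generators -/
noncomputable def fm {k : ℕ} (hk : 1 ≤ k) : SIdx k → Matrix (Idx k) (Idx k) ℝ
  | .inl μ =>
      E (.inr ⟨(μ:ℕ)+1, by have := μ.isLt; omega⟩) (.inr ⟨(μ:ℕ), by have := μ.isLt; omega⟩)
    + E (.inr ⟨2*k-(μ:ℕ)-1, by have := μ.isLt; omega⟩)
        (.inr ⟨2*k-(μ:ℕ)-2, by have := μ.isLt; omega⟩)
  | .inr i =>
      if i = 0 then
        -E (.inl 0) (.inr ⟨k-1, by omega⟩) + ((-1:ℝ)^k) • E (.inr ⟨k, by omega⟩) (.inl 1)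
      else
        -E (.inl 1) (.inr ⟨k-1, by omega⟩) + ((-1:ℝ)^k) • E (.inr ⟨k, by omega⟩) (.inl 0)

/-- vector representation of the Cartan generators -/
noncomputable def hm {k : ℕ} (hk : 1 ≤ k) : SIdx k → Matrix (Idx k) (Idx k) ℝ
  | .inl μ =>
      E (.inr ⟨(μ:ℕ)+1, by have := μ.isLt; omega⟩) (.inr ⟨(μ:ℕ)+1, by have := μ.isLt; omega⟩)
    - E (.inr ⟨2*k-(μ:ℕ)-2, by have := μ.isLt; omega⟩)
        (.inr ⟨2*k-(μ:ℕ)-2, by have := μ.isLt; omega⟩)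
    - E (.inr ⟨(μ:ℕ), by have := μ.isLt; omega⟩) (.inr ⟨(μ:ℕ), by have := μ.isLt; omega⟩)
    + E (.inr ⟨2*k-(μ:ℕ)-1, by have := μ.isLt; omega⟩)
        (.inr ⟨2*k-(μ:ℕ)-1, by have := μ.isLt; omega⟩)
  | .inr i =>
      if i = 0 then
        -E (.inl 0) (.inl 0) + E (.inl 1) (.inl 1)
        - E (.inr ⟨k-1, by omega⟩) (.inr ⟨k-1, by omega⟩)
        + E (.inr ⟨k, by omega⟩) (.inr ⟨k, by omega⟩)
      else
        E (.inl 0) (.inl 0) - E (.inl 1) (.inl 1)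
        - E (.inr ⟨k-1, by omega⟩) (.inr ⟨k-1, by omega⟩)
        + E (.inr ⟨k, by omega⟩) (.inr ⟨k, by omega⟩)

/-- `q^{r·h_c}`: the diagonal matrix `Σ_a q^{r·(α_c,ε_a)} E^a_a` -/
noncomputable def qh {k : ℕ} (q : ℝ) (r : ℚ) (c : SIdx k) : Matrix (Idx k) (Idx k) ℝ :=
  Matrix.diagonal (fun a => qp q (r * bform (alph c) (wt a)))

/-- graded conjugation `†`, the linear map with `(E^a_b)† = (−1)^{[a]([a]+[b])} E^b_a`. -/
def dag {k : ℕ} (X : Matrix (Idx k) (Idx k) ℝ) : Matrix (Idx k) (Idx k) ℝ :=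
  Matrix.of fun i j => (-1:ℝ) ^ (par j * (par j + par i)) * X j i

/-- the q-bracket `[x,y]_q = xy − (−1)^{p_x p_y} q^{(λ_x,λ_y)} yx` of matrices carrying
weights `lx, ly` and parities `px, py`. -/
noncomputable def qbr {k : ℕ} (q : ℝ) (lx ly : Fin (k+1) → ℚ) (px py : ℕ)
    (x y : Matrix (Idx k) (Idx k) ℝ) : Matrix (Idx k) (Idx k) ℝ :=
  x * y - ((-1:ℝ) ^ (px * py) * qp q (bform lx ly)) • (y * x)

end Osp2n

namespace Osp2n

/-! ### Auxiliary lemmas: elementary matrix algebra -/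

section Generic
variable {n : Type*} [Fintype n] [DecidableEq n]

lemma Eg_mul_Eg (a b c d : n) :
    Matrix.single a b (1:ℝ) * Matrix.single c d 1
      = if b = c then Matrix.single a d 1 else 0 := by
  by_cases h : b = c
  · subst h; simp [Matrix.single_mul_single_same]
  · simp [h, Matrix.single_mul_single_of_ne (c := (1:ℝ)) (i := a) (j := b) (k := c) h 1]

lemma Eg_mul_diag (a b : n) (d : n → ℝ) :
    Matrix.single a b (1:ℝ) * Matrix.diagonal d = d b • Matrix.single a b 1 := by
  ext i j
  simp [Matrix.mul_diagonal, Matrix.single, Matrix.smul_apply]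
  aesop

lemma diag_mul_Eg (a b : n) (d : n → ℝ) :
    Matrix.diagonal d * Matrix.single a b (1:ℝ) = d a • Matrix.single a b 1 := by
  ext i j
  simp [Matrix.diagonal_mul, Matrix.single, Matrix.smul_apply]
  aesop

lemma ad_shape (u1 u2 v1 v2 x y : n) (d e f : n → ℝ) :
    (Matrix.single u1 u2 (1:ℝ) + Matrix.single v1 v2 1) * Matrix.diagonal d
        * Matrix.single x y 1
      - Matrix.diagonal e * Matrix.single x y 1 * Matrix.diagonal f *
          ((Matrix.single u1 u2 1 + Matrix.single v1 v2 1) * Matrix.diagonal d)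
    = d u2 • (if u2 = x then Matrix.single u1 y 1 else 0)
    + d v2 • (if v2 = x then Matrix.single v1 y 1 else 0)
    + (-(e x * f y * d u2)) • (if y = u1 then Matrix.single x u2 1 else 0)
    + (-(e x * f y * d v2)) • (if y = v1 then Matrix.single x v2 1 else 0) := by
  simp only [add_mul, mul_add, Eg_mul_diag, diag_mul_Eg, smul_mul_assoc, mul_smul_comm,
    Eg_mul_Eg, smul_smul, smul_add]
  module

end Generic

lemma E_mul_diag {k : ℕ} (a b : Idx k) (d : Idx k → ℝ) :
    E a b * Matrix.diagonal d = d b • E a b := Eg_mul_diag a b d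

/-! ### bform evaluations -/

lemma sum_single_mul {k : ℕ} (i : Fin (k+1)) (hi : (i:ℕ) < k) (g : Fin (k+1) → ℚ) :
    ∑ μ : Fin k, (Pi.single i 1 : Fin (k+1) → ℚ) μ.castSucc * g μ.castSucc = g i := by
  have h : ∀ μ : Fin k, (Pi.single i 1 : Fin (k+1) → ℚ) μ.castSucc * g μ.castSucc
      = if μ = ⟨(i:ℕ), hi⟩ then g μ.castSucc else 0 := by
    intro μ
    rw [Pi.single_apply]
    by_cases h : μ = (⟨(i:ℕ), hi⟩ : Fin k)
    · subst h
      rw [if_pos (by exact Fin.ext rfl), if_pos rfl, one_mul]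
    · rw [if_neg, if_neg h, zero_mul]
      intro he
      exact h (Fin.ext (by simpa [Fin.ext_iff] using he))
  rw [Finset.sum_congr rfl (fun μ _ => h μ), Finset.sum_ite_eq' Finset.univ]
  simp

lemma single_last_eq_zero {k : ℕ} (j : Fin (k+1)) (hj : (j:ℕ) < k) :
    (Pi.single j 1 : Fin (k+1) → ℚ) (Fin.last k) = 0 := by
  rw [Pi.single_apply, if_neg]
  intro h
  rw [Fin.ext_iff] at h
  simp [Fin.last] at h
  omega

lemma alph_inl_eq {k : ℕ} (β : Fin (k-1)) :
    alph (Sum.inl β)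
      = (Pi.single (⟨(β:ℕ), by have := β.isLt; omega⟩ : Fin (k+1)) 1 : Fin (k+1) → ℚ)
        - Pi.single (⟨(β:ℕ)+1, by have := β.isLt; omega⟩ : Fin (k+1)) 1 := rfl

lemma bform_inl_left {k : ℕ} (β : Fin (k-1)) (g : Fin (k+1) → ℚ) :
    bform (alph (Sum.inl β)) g
      = g ⟨(β:ℕ)+1, by have := β.isLt; omega⟩ - g ⟨(β:ℕ), by have := β.isLt; omega⟩ := by
  have hb := β.isLt
  rw [alph_inl_eq]
  unfold bform
  simp only [Pi.sub_apply, sub_mul, Finset.sum_sub_distrib]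
  rw [sum_single_mul _ (by show (β:ℕ) < k; omega),
      sum_single_mul _ (by show (β:ℕ)+1 < k; omega),
      single_last_eq_zero _ (by show (β:ℕ) < k; omega),
      single_last_eq_zero _ (by show (β:ℕ)+1 < k; omega)]
  ring

lemma alph_inl_apply {k : ℕ} (ν : Fin (k-1)) (c : ℕ) (hc : c < k+1) :
    alph (Sum.inl ν) ⟨c, hc⟩
      = (if c = (ν:ℕ) then 1 else 0) - (if c = (ν:ℕ)+1 then 1 else 0) := by
  rw [alph_inl_eq]
  simp only [Pi.sub_apply, Pi.single_apply, Fin.mk.injEq]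

lemma alph_inr_eq {k : ℕ} (i : Fin 2) :
    alph (Sum.inr i : SIdx k)
      = (Pi.single (⟨k-1, by omega⟩ : Fin (k+1)) 1 : Fin (k+1) → ℚ)
        + Pi.single (Fin.last k) (if i = 0 then (-1:ℚ) else 1) := rfl

lemma alph_inr_apply {k : ℕ} (i : Fin 2) (c : ℕ) (hc : c < k+1) (hck : c < k) :
    alph (Sum.inr i : SIdx k) ⟨c, hc⟩ = if c = k-1 then 1 else 0 := by
  have hne : (⟨c, hc⟩ : Fin (k+1)) ≠ Fin.last k := by
    intro h
    rw [Fin.ext_iff] at h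
    simp [Fin.last] at h
    omega
  rw [alph_inr_eq]
  simp [Pi.add_apply, Pi.single_apply, Fin.mk.injEq, hne]

/-! ### the adjoint operator -/

/-- the adjoint-type operator appearing in the q-Serre relation -/
noncomputable def adB {k : ℕ} (hk : 1 ≤ k) (q : ℝ) (b : SIdx k)
    (X : Matrix (Idx k) (Idx k) ℝ) : Matrix (Idx k) (Idx k) ℝ :=
  (em hk b * qh q (1/2) b) * X
    - qh q 1 b * X * qh q (-1) b * (em hk b * qh q (1/2) b)

lemma adB_add {k : ℕ} (hk : 1 ≤ k) (q : ℝ) (b : SIdx k) (X Y : Matrix (Idx k) (Idx k) ℝ) :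
    adB hk q b (X + Y) = adB hk q b X + adB hk q b Y := by
  simp only [adB, mul_add, add_mul]
  abel

lemma adB_smul {k : ℕ} (hk : 1 ≤ k) (q : ℝ) (b : SIdx k) (r : ℝ)
    (X : Matrix (Idx k) (Idx k) ℝ) :
    adB hk q b (r • X) = r • adB hk q b X := by
  simp only [adB, Matrix.mul_smul, Matrix.smul_mul, smul_sub]

lemma adB_single {k : ℕ} (hk : 1 ≤ k) (q : ℝ) (β : Fin (k-1)) (x y : Idx k) :
    ∃ r1 r2 r3 r4 : ℝ,
      adB hk q (Sum.inl β) (E x y)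
        = r1 • (if (Sum.inr ⟨(β:ℕ)+1, by have := β.isLt; omega⟩ : Idx k) = x
            then E (Sum.inr ⟨(β:ℕ), by have := β.isLt; omega⟩) y else 0)
        + r2 • (if (Sum.inr ⟨2*k-(β:ℕ)-1, by have := β.isLt; omega⟩ : Idx k) = x
            then E (Sum.inr ⟨2*k-(β:ℕ)-2, by have := β.isLt; omega⟩) y else 0)
        + r3 • (if y = (Sum.inr ⟨(β:ℕ), by have := β.isLt; omega⟩ : Idx k)
            then E x (Sum.inr ⟨(β:ℕ)+1, by have := β.isLt; omega⟩) else 0)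
        + r4 • (if y = (Sum.inr ⟨2*k-(β:ℕ)-2, by have := β.isLt; omega⟩ : Idx k)
            then E x (Sum.inr ⟨2*k-(β:ℕ)-1, by have := β.isLt; omega⟩) else 0) := by
  have hem : em hk (Sum.inl β)
      = E (Sum.inr ⟨(β:ℕ), by have := β.isLt; omega⟩)
          (Sum.inr ⟨(β:ℕ)+1, by have := β.isLt; omega⟩)
      + E (Sum.inr ⟨2*k-(β:ℕ)-2, by have := β.isLt; omega⟩)
          (Sum.inr ⟨2*k-(β:ℕ)-1, by have := β.isLt; omega⟩) := rfl
  have hqh : ∀ r : ℚ, qh (k := k) q r (Sum.inl β)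
      = Matrix.diagonal (fun a => qp q (r * bform (alph (Sum.inl β)) (wt a))) := fun _ => rfl
  exact ⟨_, _, _, _, by
    unfold adB
    rw [hem]
    simp only [hqh, E]
    exact ad_shape _ _ _ _ x y _ _ _⟩

lemma adB_E_zero {k : ℕ} (hk : 1 ≤ k) (q : ℝ) (β : Fin (k-1)) (x y : Idx k)
    (h1 : (Sum.inr ⟨(β:ℕ)+1, by have := β.isLt; omega⟩ : Idx k) ≠ x)
    (h2 : (Sum.inr ⟨2*k-(β:ℕ)-1, by have := β.isLt; omega⟩ : Idx k) ≠ x)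
    (h3 : y ≠ (Sum.inr ⟨(β:ℕ), by have := β.isLt; omega⟩ : Idx k))
    (h4 : y ≠ (Sum.inr ⟨2*k-(β:ℕ)-2, by have := β.isLt; omega⟩ : Idx k)) :
    adB hk q (Sum.inl β) (E x y) = 0 := by
  obtain ⟨r1, r2, r3, r4, h⟩ := adB_single hk q β x y
  rw [h, if_neg h1, if_neg h2, if_neg h3, if_neg h4]
  simp

lemma adB_E_C1 {k : ℕ} (hk : 1 ≤ k) (q : ℝ) (β : Fin (k-1)) (y : Idx k)
    (h3 : y ≠ (Sum.inr ⟨(β:ℕ), by have := β.isLt; omega⟩ : Idx k))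
    (h4 : y ≠ (Sum.inr ⟨2*k-(β:ℕ)-2, by have := β.isLt; omega⟩ : Idx k)) :
    ∃ r : ℝ, adB hk q (Sum.inl β) (E (Sum.inr ⟨(β:ℕ)+1, by have := β.isLt; omega⟩) y)
      = r • E (Sum.inr ⟨(β:ℕ), by have := β.isLt; omega⟩) y := by
  obtain ⟨r1, r2, r3, r4, h⟩ := adB_single hk q β (Sum.inr ⟨(β:ℕ)+1, by have := β.isLt; omega⟩) y
  refine ⟨r1, ?_⟩
  rw [h, if_pos rfl,
    if_neg (by simp only [ne_eq, Sum.inr.injEq, Fin.mk.injEq]; have := β.isLt; omega),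
    if_neg h3, if_neg h4]
  simp

lemma adB_E_C2 {k : ℕ} (hk : 1 ≤ k) (q : ℝ) (β : Fin (k-1)) (y : Idx k)
    (h3 : y ≠ (Sum.inr ⟨(β:ℕ), by have := β.isLt; omega⟩ : Idx k))
    (h4 : y ≠ (Sum.inr ⟨2*k-(β:ℕ)-2, by have := β.isLt; omega⟩ : Idx k)) :
    ∃ r : ℝ, adB hk q (Sum.inl β) (E (Sum.inr ⟨2*k-(β:ℕ)-1, by have := β.isLt; omega⟩) y)
      = r • E (Sum.inr ⟨2*k-(β:ℕ)-2, by have := β.isLt; omega⟩) y := by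
  obtain ⟨r1, r2, r3, r4, h⟩ :=
    adB_single hk q β (Sum.inr ⟨2*k-(β:ℕ)-1, by have := β.isLt; omega⟩) y
  refine ⟨r2, ?_⟩
  rw [h,
    if_neg (by simp only [ne_eq, Sum.inr.injEq, Fin.mk.injEq]; have := β.isLt; omega),
    if_pos rfl, if_neg h3, if_neg h4]
  simp

lemma adB_E_C3 {k : ℕ} (hk : 1 ≤ k) (q : ℝ) (β : Fin (k-1)) (x : Idx k)
    (h1 : (Sum.inr ⟨(β:ℕ)+1, by have := β.isLt; omega⟩ : Idx k) ≠ x)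
    (h2 : (Sum.inr ⟨2*k-(β:ℕ)-1, by have := β.isLt; omega⟩ : Idx k) ≠ x) :
    ∃ r : ℝ, adB hk q (Sum.inl β) (E x (Sum.inr ⟨(β:ℕ), by have := β.isLt; omega⟩))
      = r • E x (Sum.inr ⟨(β:ℕ)+1, by have := β.isLt; omega⟩) := by
  obtain ⟨r1, r2, r3, r4, h⟩ := adB_single hk q β x (Sum.inr ⟨(β:ℕ), by have := β.isLt; omega⟩)
  refine ⟨r3, ?_⟩
  rw [h, if_neg h1, if_neg h2, if_pos rfl,
    if_neg (by simp only [ne_eq, Sum.inr.injEq, Fin.mk.injEq]; have := β.isLt; omega)]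
  simp

lemma adB_E_C4 {k : ℕ} (hk : 1 ≤ k) (q : ℝ) (β : Fin (k-1)) (x : Idx k)
    (h1 : (Sum.inr ⟨(β:ℕ)+1, by have := β.isLt; omega⟩ : Idx k) ≠ x)
    (h2 : (Sum.inr ⟨2*k-(β:ℕ)-1, by have := β.isLt; omega⟩ : Idx k) ≠ x) :
    ∃ r : ℝ, adB hk q (Sum.inl β) (E x (Sum.inr ⟨2*k-(β:ℕ)-2, by have := β.isLt; omega⟩))
      = r • E x (Sum.inr ⟨2*k-(β:ℕ)-1, by have := β.isLt; omega⟩) := by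
  obtain ⟨r1, r2, r3, r4, h⟩ :=
    adB_single hk q β x (Sum.inr ⟨2*k-(β:ℕ)-2, by have := β.isLt; omega⟩)
  refine ⟨r4, ?_⟩
  rw [h, if_neg h1, if_neg h2,
    if_neg (by simp only [ne_eq, Sum.inr.injEq, Fin.mk.injEq]; have := β.isLt; omega),
    if_pos rfl]
  simp

lemma Ec_even {k : ℕ} (hk : 1 ≤ k) (q : ℝ) (ν : Fin (k-1)) :
    ∃ s t : ℝ, em hk (Sum.inl ν) * qh q (1/2) (Sum.inl ν)
      = s • E (Sum.inr ⟨(ν:ℕ), by have := ν.isLt; omega⟩)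
            (Sum.inr ⟨(ν:ℕ)+1, by have := ν.isLt; omega⟩)
      + t • E (Sum.inr ⟨2*k-(ν:ℕ)-2, by have := ν.isLt; omega⟩)
            (Sum.inr ⟨2*k-(ν:ℕ)-1, by have := ν.isLt; omega⟩) := by
  have hem : em hk (Sum.inl ν)
      = E (Sum.inr ⟨(ν:ℕ), by have := ν.isLt; omega⟩)
          (Sum.inr ⟨(ν:ℕ)+1, by have := ν.isLt; omega⟩)
      + E (Sum.inr ⟨2*k-(ν:ℕ)-2, by have := ν.isLt; omega⟩)
          (Sum.inr ⟨2*k-(ν:ℕ)-1, by have := ν.isLt; omega⟩) := rfl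
  have hqh : qh (k := k) q (1/2) (Sum.inl ν)
      = Matrix.diagonal (fun a => qp q ((1/2) * bform (alph (Sum.inl ν)) (wt a))) := rfl
  exact ⟨_, _, by rw [hem, hqh, add_mul, E_mul_diag, E_mul_diag]⟩

lemma Ec_odd {k : ℕ} (hk : 1 ≤ k) (q : ℝ) (i : Fin 2) :
    ∃ (s t : ℝ) (a1 a2 : Fin 2), em hk (Sum.inr i) * qh q (1/2) (Sum.inr i)
      = s • E (Sum.inr ⟨k-1, by omega⟩) (Sum.inl a1)
      + t • E (Sum.inl a2) (Sum.inr ⟨k, by omega⟩) := by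
  have hqh : qh (k := k) q (1/2) (Sum.inr i)
      = Matrix.diagonal (fun a => qp q ((1/2) * bform (alph (Sum.inr i)) (wt a))) := rfl
  by_cases h : i = 0
  · subst h
    have hem : em hk (Sum.inr (0 : Fin 2))
        = E (Sum.inr ⟨k-1, by omega⟩) (Sum.inl 0)
          + ((-1:ℝ)^k) • E (Sum.inl 1) (Sum.inr ⟨k, by omega⟩) := by
      simp [em]
    exact ⟨_, _, 0, 1, by
      rw [hem, hqh, add_mul, E_mul_diag, smul_mul_assoc, E_mul_diag, smul_smul]⟩
  · have h1 : i = 1 := by fin_cases i <;> simp_all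
    subst h1
    have hem : em hk (Sum.inr (1 : Fin 2))
        = E (Sum.inr ⟨k-1, by omega⟩) (Sum.inl 1)
          + ((-1:ℝ)^k) • E (Sum.inl 0) (Sum.inr ⟨k, by omega⟩) := by
      simp [em]
    exact ⟨_, _, 1, 0, by
      rw [hem, hqh, add_mul, E_mul_diag, smul_mul_assoc, E_mul_diag, smul_smul]⟩

end Osp2n


namespace Osp2n

/-- The q-Serre relations for the even simple roots: for every even
simple root index `b` and simple root index `c ≠ b`,
`(ad_b)^{1−a_{bc}}(E_c) = 0` where `E_c = e_c q^{h_c/2}`,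
`ad_b(X) = E_b X − q^{h_b} X q^{−h_b} E_b` and `a_{bc} = 2(α_b,α_c)/(α_b,α_b)`. -/
theorem q_serre_even (k : ℕ) (hk : 2 ≤ k) (q : ℝ) (hq : 0 < q) (hq1 : q ≠ 1)
    (b : Fin (k-1)) (c : SIdx k) (hbc : (Sum.inl b : SIdx k) ≠ c)
    (m : ℕ)
    (hm : (m : ℚ) = 1 - 2 * bform (alph (Sum.inl b : SIdx k)) (alph c) /
            bform (alph (Sum.inl b : SIdx k)) (alph (Sum.inl b : SIdx k))) :
    (fun X : Matrix (Idx k) (Idx k) ℝ =>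
        (em (Nat.le_of_succ_le hk) (Sum.inl b) * qh q (1/2) (Sum.inl b)) * X
        - qh q 1 (Sum.inl b) * X * qh q (-1) (Sum.inl b) *
            (em (Nat.le_of_succ_le hk) (Sum.inl b) * qh q (1/2) (Sum.inl b)))^[m]
      (em (Nat.le_of_succ_le hk) c * qh q (1/2) c) = 0 := by
  have hk1 : 1 ≤ k := Nat.le_of_succ_le hk
  have hb := b.isLt
  have hit2 : ∀ (f : Matrix (Idx k) (Idx k) ℝ → Matrix (Idx k) (Idx k) ℝ) x,
      f^[2] x = f (f x) := fun f x => rfl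
  have hit1 : ∀ (f : Matrix (Idx k) (Idx k) ℝ → Matrix (Idx k) (Idx k) ℝ) x,
      f^[1] x = f x := fun f x => rfl
  show (adB (Nat.le_of_succ_le hk) q (Sum.inl b))^[m]
      (em (Nat.le_of_succ_le hk) c * qh q (1/2) c) = 0
  have hBB : bform (alph (Sum.inl b)) (alph (Sum.inl b)) = -2 := by
    rw [bform_inl_left, alph_inl_apply, alph_inl_apply]
    split_ifs <;> first | omega | norm_num
  rcases c with ν | i
  · -- `c` is an even simple root
    have hν := ν.isLt
    have hbc' : (b:ℕ) ≠ (ν:ℕ) := fun h => hbc (congrArg Sum.inl (Fin.ext h))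
    have hC : bform (alph (Sum.inl b)) (alph (Sum.inl ν))
        = if (ν:ℕ) = (b:ℕ)+1 ∨ (b:ℕ) = (ν:ℕ)+1 then 1 else 0 := by
      rw [bform_inl_left, alph_inl_apply, alph_inl_apply]
      split_ifs <;> first | omega | norm_num
    obtain ⟨s, t, hst⟩ := Ec_even hk1 q ν
    by_cases hadj : (ν:ℕ) = (b:ℕ)+1 ∨ (b:ℕ) = (ν:ℕ)+1
    · have hm2 : m = 2 := by
        rw [hBB, hC, if_pos hadj] at hm
        norm_num at hm
        exact_mod_cast hm
      subst hm2
      rw [hit2, hst, adB_add, adB_smul, adB_smul]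
      rcases hadj with hadj | hadj
      · -- ν = b+1
        rw [show (Sum.inr ⟨(ν:ℕ), by have := ν.isLt; omega⟩ : Idx k)
              = Sum.inr ⟨(b:ℕ)+1, by have := b.isLt; omega⟩ from
              by simp only [Sum.inr.injEq, Fin.mk.injEq]; omega,
            show (Sum.inr ⟨2*k-(ν:ℕ)-1, by have := ν.isLt; omega⟩ : Idx k)
              = Sum.inr ⟨2*k-(b:ℕ)-2, by have := b.isLt; omega⟩ from
              by simp only [Sum.inr.injEq, Fin.mk.injEq]; omega]
        obtain ⟨rA, hA⟩ := adB_E_C1 hk1 q b (Sum.inr ⟨(ν:ℕ)+1, by have := ν.isLt; omega⟩)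
          (by simp only [ne_eq, Sum.inr.injEq, Fin.mk.injEq]; omega)
          (by simp only [ne_eq, Sum.inr.injEq, Fin.mk.injEq]; omega)
        obtain ⟨rB, hB⟩ := adB_E_C4 hk1 q b (Sum.inr ⟨2*k-(ν:ℕ)-2, by have := ν.isLt; omega⟩)
          (by simp only [ne_eq, Sum.inr.injEq, Fin.mk.injEq]; omega)
          (by simp only [ne_eq, Sum.inr.injEq, Fin.mk.injEq]; omega)
        rw [hA, hB, adB_add, adB_smul, adB_smul, adB_smul, adB_smul,
          adB_E_zero hk1 q b (Sum.inr ⟨(b:ℕ), by have := b.isLt; omega⟩)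
            (Sum.inr ⟨(ν:ℕ)+1, by have := ν.isLt; omega⟩)
            (by simp only [ne_eq, Sum.inr.injEq, Fin.mk.injEq]; omega)
            (by simp only [ne_eq, Sum.inr.injEq, Fin.mk.injEq]; omega)
            (by simp only [ne_eq, Sum.inr.injEq, Fin.mk.injEq]; omega)
            (by simp only [ne_eq, Sum.inr.injEq, Fin.mk.injEq]; omega),
          adB_E_zero hk1 q b (Sum.inr ⟨2*k-(ν:ℕ)-2, by have := ν.isLt; omega⟩)
            (Sum.inr ⟨2*k-(b:ℕ)-1, by have := b.isLt; omega⟩)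
            (by simp only [ne_eq, Sum.inr.injEq, Fin.mk.injEq]; omega)
            (by simp only [ne_eq, Sum.inr.injEq, Fin.mk.injEq]; omega)
            (by simp only [ne_eq, Sum.inr.injEq, Fin.mk.injEq]; omega)
            (by simp only [ne_eq, Sum.inr.injEq, Fin.mk.injEq]; omega)]
        simp
      · -- b = ν+1
        rw [show (Sum.inr ⟨(ν:ℕ)+1, by have := ν.isLt; omega⟩ : Idx k)
              = Sum.inr ⟨(b:ℕ), by have := b.isLt; omega⟩ from
              by simp only [Sum.inr.injEq, Fin.mk.injEq]; omega,
            show (Sum.inr ⟨2*k-(ν:ℕ)-2, by have := ν.isLt; omega⟩ : Idx k)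
              = Sum.inr ⟨2*k-(b:ℕ)-1, by have := b.isLt; omega⟩ from
              by simp only [Sum.inr.injEq, Fin.mk.injEq]; omega]
        obtain ⟨rA, hA⟩ := adB_E_C3 hk1 q b (Sum.inr ⟨(ν:ℕ), by have := ν.isLt; omega⟩)
          (by simp only [ne_eq, Sum.inr.injEq, Fin.mk.injEq]; omega)
          (by simp only [ne_eq, Sum.inr.injEq, Fin.mk.injEq]; omega)
        obtain ⟨rB, hB⟩ := adB_E_C2 hk1 q b (Sum.inr ⟨2*k-(ν:ℕ)-1, by have := ν.isLt; omega⟩)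
          (by simp only [ne_eq, Sum.inr.injEq, Fin.mk.injEq]; omega)
          (by simp only [ne_eq, Sum.inr.injEq, Fin.mk.injEq]; omega)
        rw [hA, hB, adB_add, adB_smul, adB_smul, adB_smul, adB_smul,
          adB_E_zero hk1 q b (Sum.inr ⟨(ν:ℕ), by have := ν.isLt; omega⟩)
            (Sum.inr ⟨(b:ℕ)+1, by have := b.isLt; omega⟩)
            (by simp only [ne_eq, Sum.inr.injEq, Fin.mk.injEq]; omega)
            (by simp only [ne_eq, Sum.inr.injEq, Fin.mk.injEq]; omega)
            (by simp only [ne_eq, Sum.inr.injEq, Fin.mk.injEq]; omega)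
            (by simp only [ne_eq, Sum.inr.injEq, Fin.mk.injEq]; omega),
          adB_E_zero hk1 q b (Sum.inr ⟨2*k-(b:ℕ)-2, by have := b.isLt; omega⟩)
            (Sum.inr ⟨2*k-(ν:ℕ)-1, by have := ν.isLt; omega⟩)
            (by simp only [ne_eq, Sum.inr.injEq, Fin.mk.injEq]; omega)
            (by simp only [ne_eq, Sum.inr.injEq, Fin.mk.injEq]; omega)
            (by simp only [ne_eq, Sum.inr.injEq, Fin.mk.injEq]; omega)
            (by simp only [ne_eq, Sum.inr.injEq, Fin.mk.injEq]; omega)]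
        simp
    · have hm1 : m = 1 := by
        rw [hBB, hC, if_neg hadj] at hm
        norm_num at hm
        exact_mod_cast hm
      subst hm1
      rw [hit1, hst, adB_add, adB_smul, adB_smul,
        adB_E_zero hk1 q b (Sum.inr ⟨(ν:ℕ), by have := ν.isLt; omega⟩)
          (Sum.inr ⟨(ν:ℕ)+1, by have := ν.isLt; omega⟩)
          (by simp only [ne_eq, Sum.inr.injEq, Fin.mk.injEq]; omega)
          (by simp only [ne_eq, Sum.inr.injEq, Fin.mk.injEq]; omega)
          (by simp only [ne_eq, Sum.inr.injEq, Fin.mk.injEq]; omega)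
          (by simp only [ne_eq, Sum.inr.injEq, Fin.mk.injEq]; omega),
        adB_E_zero hk1 q b (Sum.inr ⟨2*k-(ν:ℕ)-2, by have := ν.isLt; omega⟩)
          (Sum.inr ⟨2*k-(ν:ℕ)-1, by have := ν.isLt; omega⟩)
          (by simp only [ne_eq, Sum.inr.injEq, Fin.mk.injEq]; omega)
          (by simp only [ne_eq, Sum.inr.injEq, Fin.mk.injEq]; omega)
          (by simp only [ne_eq, Sum.inr.injEq, Fin.mk.injEq]; omega)
          (by simp only [ne_eq, Sum.inr.injEq, Fin.mk.injEq]; omega)]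
      simp
  · -- `c` is an odd simple root
    have hC : bform (alph (Sum.inl b)) (alph (Sum.inr i))
        = if (b:ℕ)+1 = k-1 then 1 else 0 := by
      rw [bform_inl_left,
        alph_inr_apply i ((b:ℕ)+1) (by have := b.isLt; omega) (by have := b.isLt; omega),
        alph_inr_apply i (b:ℕ) (by have := b.isLt; omega) (by have := b.isLt; omega)]
      split_ifs <;> first | omega | norm_num
    obtain ⟨s, t, a1, a2, hst⟩ := Ec_odd hk1 q i
    by_cases hadj : (b:ℕ)+1 = k-1
    · have hm2 : m = 2 := by
        rw [hBB, hC, if_pos hadj] at hm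
        norm_num at hm
        exact_mod_cast hm
      subst hm2
      rw [hit2, hst, adB_add, adB_smul, adB_smul,
        show (Sum.inr ⟨k-1, by omega⟩ : Idx k)
            = Sum.inr ⟨(b:ℕ)+1, by have := b.isLt; omega⟩ from
            by simp only [Sum.inr.injEq, Fin.mk.injEq]; omega,
        show (Sum.inr ⟨k, by omega⟩ : Idx k)
            = Sum.inr ⟨2*k-(b:ℕ)-2, by have := b.isLt; omega⟩ from
            by simp only [Sum.inr.injEq, Fin.mk.injEq]; omega]
      obtain ⟨rA, hA⟩ := adB_E_C1 hk1 q b (Sum.inl a1) (by simp) (by simp)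
      obtain ⟨rB, hB⟩ := adB_E_C4 hk1 q b (Sum.inl a2) (by simp) (by simp)
      rw [hA, hB, adB_add, adB_smul, adB_smul, adB_smul, adB_smul,
        adB_E_zero hk1 q b (Sum.inr ⟨(b:ℕ), by have := b.isLt; omega⟩) (Sum.inl a1)
          (by simp only [ne_eq, Sum.inr.injEq, Fin.mk.injEq]; omega)
          (by simp only [ne_eq, Sum.inr.injEq, Fin.mk.injEq]; omega)
          (by simp) (by simp),
        adB_E_zero hk1 q b (Sum.inl a2) (Sum.inr ⟨2*k-(b:ℕ)-1, by have := b.isLt; omega⟩)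
          (by simp) (by simp)
          (by simp only [ne_eq, Sum.inr.injEq, Fin.mk.injEq]; omega)
          (by simp only [ne_eq, Sum.inr.injEq, Fin.mk.injEq]; omega)]
      simp
    · have hm1 : m = 1 := by
        rw [hBB, hC, if_neg hadj] at hm
        norm_num at hm
        exact_mod_cast hm
      subst hm1
      rw [hit1, hst, adB_add, adB_smul, adB_smul,
        adB_E_zero hk1 q b (Sum.inr ⟨k-1, by omega⟩) (Sum.inl a1)
          (by simp only [ne_eq, Sum.inr.injEq, Fin.mk.injEq]; omega)
          (by simp only [ne_eq, Sum.inr.injEq, Fin.mk.injEq]; omega)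
          (by simp) (by simp),
        adB_E_zero hk1 q b (Sum.inl a2) (Sum.inr ⟨k, by omega⟩)
          (by simp) (by simp)
          (by simp only [ne_eq, Sum.inr.injEq, Fin.mk.injEq]; omega)
          (by simp only [ne_eq, Sum.inr.injEq, Fin.mk.injEq]; omega)]
      simp


end Osp2n
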